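/- There exists a constant C > 0 depending only on d such that for every probability measure ℙ as in the setting, every f : Ω → ℝ in L²(ℙ) with 𝒩(f) < ∞, and every t > 0: 𝔼[(exp(tL°) f)²] ≤ C · 𝒩(f) / t^{d/2}. -/

import Mathlib

open MeasureTheory ENNReal
open scoped ENNReal NNReal BigOperators

namespace RWRC

/-- sites of `ℤ^d` -/
abbrev V (d : ℕ) := Fin d → ℤ

/-- an (unoriented) nearest-neighbour edge of `ℤ^d`, encoded as `(x, i) = {x, x + eᵢ}` -/
abbrev Edge (d : ℕ) := (Fin d → ℤ) × Fin d

/-- an environment: a conductance attached to every edge -/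
abbrev Env (d : ℕ) := Edge d → ℝ

/-- translation of the environment by `x` : `(θ_x ω)_{y,z} = ω_{x+y,x+z}` -/
def theta {d : ℕ} (x : V d) (ω : Env d) : Env d := fun e => ω (x + e.1, e.2)

/-- the unit vector `±eᵢ` encoded by `p = (i, sign)` -/
def dir {d : ℕ} (p : Fin d × Bool) : V d :=
  if p.2 then Pi.single p.1 1 else -Pi.single p.1 1

/-- the edge `{0, dir p}` -/
def edgeOf {d : ℕ} (p : Fin d × Bool) : Edge d :=
  (if p.2 then (0 : V d) else -Pi.single p.1 1, p.1)

/-- the box `B_n = {-n, …, n}^d` -/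
noncomputable def box (d n : ℕ) : Finset (V d) := Fintype.piFinset fun _ => Finset.Icc (-(n : ℤ)) n

/-- `S_n(f)(ω) = ∑_{x ∈ B_n} f(θ_x ω)` -/
noncomputable def Sfun (d n : ℕ) (f : Env d → ℝ) (ω : Env d) : ℝ :=
  ∑ x ∈ box d n, f (theta x ω)

/-- Dirichlet form `ℰ(f,f) = (1/2) ∑_{|z|=1} 𝔼[ω_{0,z} (f(θ_z ω) - f(ω))²]` of the random walk
among random conductances -/
noncomputable def dirichlet {d : ℕ} (P : Measure (Env d)) (f : Env d → ℝ) : ℝ :=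
  (1 / 2) * ∑ p : Fin d × Bool,
    ∫ ω, ω (edgeOf p) * (f (theta (dir p) ω) - f ω) ^ 2 ∂P

/-- Dirichlet form `ℰ°(f,f) = (1/2) ∑_{|z|=1} 𝔼[(f(θ_z ω) - f(ω))²]` of the simple random walk -/
noncomputable def dirichlet0 {d : ℕ} (P : Measure (Env d)) (f : Env d → ℝ) : ℝ :=
  (1 / 2) * ∑ p : Fin d × Bool,
    ∫ ω, (f (theta (dir p) ω) - f ω) ^ 2 ∂P

/-! ### Auxiliary material for the proof -/

open scoped RealInnerProductSpace

section Translations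

variable {d : ℕ} {P : Measure (Env d)}

lemma theta_theta (x y : V d) (ω : Env d) : theta x (theta y ω) = theta (y + x) ω := by
  funext e; simp only [theta]; congr 2; abel

lemma theta_zero (ω : Env d) : theta (0 : V d) ω = ω := by
  funext e; simp [theta]

/-- translation operator on `L²(P)` -/
noncomputable def Umap (hθ : ∀ x : V d, MeasurePreserving (theta x) P P) (x : V d) :
    Lp ℝ 2 P →L[ℝ] Lp ℝ 2 P :=
  LinearMap.mkContinuous
    { toFun := fun g => Lp.compMeasurePreserving (theta x) (hθ x) g
      map_add' := fun g h => by exact map_add _ g h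
      map_smul' := fun c g => by
        apply Lp.ext
        filter_upwards [Lp.coeFn_compMeasurePreserving (c • g) (hθ x),
          (hθ x).quasiMeasurePreserving.ae_eq_comp (Lp.coeFn_smul c g),
          Lp.coeFn_smul c (Lp.compMeasurePreserving (theta x) (hθ x) g),
          Lp.coeFn_compMeasurePreserving g (hθ x)] with ω h1 h2 h3 h4
        simp only [Function.comp_apply, Pi.smul_apply, smul_eq_mul, RingHom.id_apply] at *
        rw [h1, h2, h3, h4] }
    1 (fun g => by simp)

variable (hθ : ∀ x : V d, MeasurePreserving (theta x) P P)

lemma Umap_coe (x : V d) (g : Lp ℝ 2 P) :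
    ⇑(Umap hθ x g) =ᵐ[P] fun ω => g (theta x ω) :=
  Lp.coeFn_compMeasurePreserving g (hθ x)

lemma norm_Umap (x : V d) (g : Lp ℝ 2 P) : ‖Umap hθ x g‖ = ‖g‖ :=
  Lp.norm_compMeasurePreserving g (hθ x)

lemma Umap_comp (x y : V d) (g : Lp ℝ 2 P) :
    Umap hθ x (Umap hθ y g) = Umap hθ (x + y) g := by
  apply Lp.ext
  filter_upwards [Umap_coe hθ x (Umap hθ y g),
    (hθ x).quasiMeasurePreserving.ae_eq_comp (Umap_coe hθ y g),
    Umap_coe hθ (x + y) g] with ω h1 h2 h3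
  simp only [Function.comp_apply] at h2
  rw [h1, h2, h3, theta_theta]

lemma Umap_zero (g : Lp ℝ 2 P) : Umap hθ 0 g = g := by
  apply Lp.ext
  filter_upwards [Umap_coe hθ 0 g] with ω h1
  rw [h1, theta_zero]

lemma coeFn_finset_sum {ι : Type*} (s : Finset ι) (G : ι → Lp ℝ 2 P) :
    ⇑(∑ i ∈ s, G i) =ᵐ[P] fun ω => ∑ i ∈ s, G i ω := by
  classical
  induction s using Finset.induction_on with
  | empty => simp only [Finset.sum_empty]; exact Lp.coeFn_zero ℝ 2 P
  | insert a s hnot ih =>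
    rw [Finset.sum_insert hnot]
    filter_upwards [Lp.coeFn_add (G a) (∑ i ∈ s, G i), ih] with ω h1 h2
    simp only [h1, Pi.add_apply, h2, Finset.sum_insert hnot]

lemma inner_sub_Umap (x : V d) (g : Lp ℝ 2 P) :
    ⟪g - Umap hθ x g, g⟫ = ‖g - Umap hθ x g‖ ^ 2 / 2 := by
  have h1 : ⟪g - Umap hθ x g, g - Umap hθ x g⟫
      = ⟪g, g⟫ - 2 * ⟪g, Umap hθ x g⟫ + ⟪Umap hθ x g, Umap hθ x g⟫ :=
    real_inner_sub_sub_self _ _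
  have h2 : ⟪Umap hθ x g, Umap hθ x g⟫ = ⟪g, g⟫ := by
    rw [real_inner_self_eq_norm_sq, real_inner_self_eq_norm_sq, norm_Umap]
  have h3 : ⟪g - Umap hθ x g, g⟫ = ⟪g, g⟫ - ⟪g, Umap hθ x g⟫ := by
    rw [inner_sub_left, real_inner_comm g (Umap hθ x g)]
  have h4 : ‖g - Umap hθ x g‖ ^ 2 = ⟪g - Umap hθ x g, g - Umap hθ x g⟫ :=
    (real_inner_self_eq_norm_sq _).symm
  rw [h4, h1, h2, h3]; ring

lemma norm_sub_Umap_single_le (p : Fin d × Bool) (g : Lp ℝ 2 P) :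
    ‖g - Umap hθ (dir p) g‖
      ≤ Real.sqrt (∑ q : Fin d × Bool, ‖g - Umap hθ (dir q) g‖ ^ 2) := by
  rw [show ‖g - Umap hθ (dir p) g‖ = Real.sqrt (‖g - Umap hθ (dir p) g‖ ^ 2) by
    rw [Real.sqrt_sq (norm_nonneg _)]]
  apply Real.sqrt_le_sqrt
  exact Finset.single_le_sum (f := fun q => ‖g - Umap hθ (dir q) g‖ ^ 2)
    (fun q _ => sq_nonneg _) (Finset.mem_univ p)

/-- telescoping estimate along a lattice path -/
lemma norm_sub_Umap_le (g : Lp ℝ 2 P) :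
    ∀ (k : ℕ) (x : V d), (∑ i, (x i).natAbs) = k →
      ‖g - Umap hθ x g‖
        ≤ (k : ℝ) * Real.sqrt (∑ q : Fin d × Bool, ‖g - Umap hθ (dir q) g‖ ^ 2) := by
  intro k
  induction k with
  | zero =>
    intro x hx
    have hx0 : x = 0 := by
      funext i
      have h1 : (x i).natAbs = 0 := by
        have := Finset.sum_eq_zero_iff.mp hx i (Finset.mem_univ i)
        omega
      simpa using Int.natAbs_eq_zero.mp h1
    rw [hx0, Umap_zero]; simp
  | succ k ih =>
    intro x hx
    have hex : ∃ i, x i ≠ 0 := by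
      by_contra h; push_neg at h
      have : ∑ i, (x i).natAbs = 0 := Finset.sum_eq_zero fun i _ => by rw [h i]; rfl
      omega
    obtain ⟨i, hi⟩ := hex
    have hSB : (0:ℝ) ≤ Real.sqrt (∑ q : Fin d × Bool, ‖g - Umap hθ (dir q) g‖ ^ 2) :=
      Real.sqrt_nonneg _
    rcases hi.lt_or_gt with hneg | hpos
    · -- x i < 0, step in direction `-eᵢ`
      set y := Function.update x i (x i + 1) with hy
      have hxy : x = y + dir (i, false) := by
        funext j
        by_cases hj : j = i
        · subst hj
          simp [hy, dir, Function.update_self, Pi.single_apply]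
        · simp [hy, dir, Function.update_of_ne hj, Pi.single_apply, hj]
      have hsum : (∑ j, (y j).natAbs) = k := by
        have h1 : ∑ j, (x j).natAbs
            = (x i).natAbs + ∑ j ∈ Finset.univ.erase i, (x j).natAbs :=
          (Finset.add_sum_erase _ _ (Finset.mem_univ i)).symm
        have h2 : ∑ j, (y j).natAbs
            = (y i).natAbs + ∑ j ∈ Finset.univ.erase i, (y j).natAbs :=
          (Finset.add_sum_erase _ _ (Finset.mem_univ i)).symm
        have h3 : ∑ j ∈ Finset.univ.erase i, (y j).natAbs
            = ∑ j ∈ Finset.univ.erase i, (x j).natAbs :=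
          Finset.sum_congr rfl fun j hj => by
            rw [hy, Function.update_of_ne (Finset.ne_of_mem_erase hj)]
        have h4 : (y i).natAbs = (x i).natAbs - 1 := by
          rw [hy, Function.update_self]; omega
        have h5 : 1 ≤ (x i).natAbs := by omega
        omega
      have hgoal : g - Umap hθ x g
          = (g - Umap hθ y g) + Umap hθ y (g - Umap hθ (dir (i, false)) g) := by
        rw [map_sub, Umap_comp, ← hxy]; abel
      rw [hgoal]
      refine le_trans (norm_add_le _ _) ?_
      rw [norm_Umap]
      have h6 := norm_sub_Umap_single_le hθ (i, false) g
      have h7 := ih y hsum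
      push_cast
      linarith
    · -- x i > 0, step in direction `eᵢ`
      set y := Function.update x i (x i - 1) with hy
      have hxy : x = y + dir (i, true) := by
        funext j
        by_cases hj : j = i
        · subst hj
          simp [hy, dir, Function.update_self, Pi.single_apply]
        · simp [hy, dir, Function.update_of_ne hj, Pi.single_apply, hj]
      have hsum : (∑ j, (y j).natAbs) = k := by
        have h1 : ∑ j, (x j).natAbs
            = (x i).natAbs + ∑ j ∈ Finset.univ.erase i, (x j).natAbs :=
          (Finset.add_sum_erase _ _ (Finset.mem_univ i)).symm
        have h2 : ∑ j, (y j).natAbs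
            = (y i).natAbs + ∑ j ∈ Finset.univ.erase i, (y j).natAbs :=
          (Finset.add_sum_erase _ _ (Finset.mem_univ i)).symm
        have h3 : ∑ j ∈ Finset.univ.erase i, (y j).natAbs
            = ∑ j ∈ Finset.univ.erase i, (x j).natAbs :=
          Finset.sum_congr rfl fun j hj => by
            rw [hy, Function.update_of_ne (Finset.ne_of_mem_erase hj)]
        have h4 : (y i).natAbs = (x i).natAbs - 1 := by
          rw [hy, Function.update_self]; omega
        have h5 : 1 ≤ (x i).natAbs := by omega
        omega
      have hgoal : g - Umap hθ x g
          = (g - Umap hθ y g) + Umap hθ y (g - Umap hθ (dir (i, true)) g) := by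
        rw [map_sub, Umap_comp, ← hxy]; abel
      rw [hgoal]
      refine le_trans (norm_add_le _ _) ?_
      rw [norm_Umap]
      have h6 := norm_sub_Umap_single_le hθ (i, true) g
      have h7 := ih y hsum
      push_cast
      linarith

/-- the averaging operator `S_n` on `L²(P)` -/
noncomputable def Sop (n : ℕ) : Lp ℝ 2 P →L[ℝ] Lp ℝ 2 P :=
  ∑ x ∈ box d n, Umap hθ x

end Translations

section Generator

variable {d : ℕ} {P : Measure (Env d)}
  (hθ : ∀ x : V d, MeasurePreserving (theta x) P P)
  {Lop : Lp ℝ 2 P →L[ℝ] Lp ℝ 2 P}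
  (hLop : ∀ g : Lp ℝ 2 P,
    (Lop g : Env d → ℝ) =ᵐ[P]
      fun ω => ∑ p : Fin d × Bool,
        ((g : Env d → ℝ) (theta (dir p) ω) - (g : Env d → ℝ) ω))

include hθ hLop

lemma Lop_eq (g : Lp ℝ 2 P) :
    Lop g = ∑ p : Fin d × Bool, (Umap hθ (dir p) g - g) := by
  apply Lp.ext
  have h1 : ∀ᵐ ω ∂P, ∀ p : Fin d × Bool, (Umap hθ (dir p) g) ω = g (theta (dir p) ω) :=
    ae_all_iff.2 fun p => Umap_coe hθ (dir p) g
  have h5 : ∀ᵐ ω ∂P, ∀ p : Fin d × Bool,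
      (Umap hθ (dir p) g - g) ω = (Umap hθ (dir p) g) ω - g ω :=
    ae_all_iff.2 fun p => (Lp.coeFn_sub (Umap hθ (dir p) g) g).mono fun ω h => by
      rw [h]; rfl
  filter_upwards [hLop g,
    coeFn_finset_sum Finset.univ (fun p : Fin d × Bool => Umap hθ (dir p) g - g),
    h1, h5] with ω h2 h3 h4 h6
  rw [h2, h3]
  exact Finset.sum_congr rfl fun p _ => by rw [h6 p, h4 p]

lemma Lop_inner (g : Lp ℝ 2 P) :
    ⟪Lop g, g⟫ = -(∑ p : Fin d × Bool, ‖g - Umap hθ (dir p) g‖ ^ 2) / 2 := by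
  rw [Lop_eq hθ hLop g, sum_inner]
  have h : ∀ p : Fin d × Bool,
      ⟪Umap hθ (dir p) g - g, g⟫ = -(‖g - Umap hθ (dir p) g‖ ^ 2 / 2) := by
    intro p
    have h2 := inner_sub_Umap hθ (dir p) g
    have h1 : Umap hθ (dir p) g - g = -(g - Umap hθ (dir p) g) := by abel
    rw [h1, inner_neg_left, h2]
  rw [Finset.sum_congr rfl fun p _ => h p, Finset.sum_neg_distrib, ← Finset.sum_div, neg_div]

lemma Lop_inner_nonpos (g : Lp ℝ 2 P) : ⟪Lop g, g⟫ ≤ 0 := by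
  rw [Lop_inner hθ hLop g]
  have : (0:ℝ) ≤ ∑ p : Fin d × Bool, ‖g - Umap hθ (dir p) g‖ ^ 2 := by positivity
  linarith

lemma Lop_comm_Umap (x : V d) : Commute Lop (Umap hθ x) := by
  refine ContinuousLinearMap.ext fun g => ?_
  simp only [ContinuousLinearMap.mul_apply]
  rw [Lop_eq hθ hLop (Umap hθ x g), Lop_eq hθ hLop g, map_sum]
  refine Finset.sum_congr rfl fun p _ => ?_
  rw [map_sub, Umap_comp, Umap_comp, add_comm]

set_option synthInstance.maxHeartbeats 1000000 in
set_option maxHeartbeats 1000000 in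
lemma exp_comm_Umap (t : ℝ) (x : V d) (g : Lp ℝ 2 P) :
    NormedSpace.exp (t • Lop) (Umap hθ x g)
      = Umap hθ x (NormedSpace.exp (t • Lop) g) := by
  have h0 := Lop_comm_Umap hθ hLop x
  have hsm : Commute (t • Lop) (Umap hθ x) := by
    show (t • Lop) * Umap hθ x = Umap hθ x * (t • Lop)
    rw [smul_mul_assoc, h0.eq, mul_smul_comm]
  have h := hsm.exp_left
  have h2 := DFunLike.congr_fun h.eq g
  simpa [ContinuousLinearMap.mul_apply] using h2

lemma exp_comm_Sop (t : ℝ) (n : ℕ) (g : Lp ℝ 2 P) :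
    NormedSpace.exp (t • Lop) (Sop hθ n g) = Sop hθ n (NormedSpace.exp (t • Lop) g) := by
  simp only [Sop, ContinuousLinearMap.sum_apply, map_sum]
  exact Finset.sum_congr rfl fun x _ => exp_comm_Umap hθ hLop t x g

omit hθ hLop in
lemma hasDerivAt_exp_apply (g : Lp ℝ 2 P) (t : ℝ) :
    HasDerivAt (fun s : ℝ => NormedSpace.exp (s • Lop) g)
      (Lop (NormedSpace.exp (t • Lop) g)) t := by
  have h1 := hasDerivAt_exp_smul_const' (𝕂 := ℝ) Lop t
  have h2 := h1.clm_apply (hasDerivAt_const t g)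
  simpa using h2

omit hθ hLop in
lemma hasDerivAt_inner_exp (g : Lp ℝ 2 P) (t : ℝ) :
    HasDerivAt
      (fun s : ℝ => ⟪NormedSpace.exp (s • Lop) g, NormedSpace.exp (s • Lop) g⟫)
      (2 * ⟪Lop (NormedSpace.exp (t • Lop) g), NormedSpace.exp (t • Lop) g⟫) t := by
  have h := hasDerivAt_exp_apply (Lop := Lop) g t
  have h2 := HasDerivAt.inner (𝕜 := ℝ) h h
  refine h2.congr_deriv ?_
  rw [real_inner_comm]
  ring

lemma innersq_antitone (g : Lp ℝ 2 P) :
    Antitone (fun s : ℝ =>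
      ⟪NormedSpace.exp (s • Lop) g, NormedSpace.exp (s • Lop) g⟫) := by
  apply antitone_of_deriv_nonpos
  · exact fun s => (hasDerivAt_inner_exp (Lop := Lop) g s).differentiableAt
  · intro s
    rw [(hasDerivAt_inner_exp (Lop := Lop) g s).deriv]
    have := Lop_inner_nonpos hθ hLop (NormedSpace.exp (s • Lop) g)
    linarith

lemma exp_contract (g : Lp ℝ 2 P) {s : ℝ} (hs : 0 ≤ s) :
    ‖NormedSpace.exp (s • Lop) g‖ ^ 2 ≤ ‖g‖ ^ 2 := by
  have h := innersq_antitone hθ hLop g hs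
  simp only [zero_smul, NormedSpace.exp_zero, ContinuousLinearMap.one_apply,
    real_inner_self_eq_norm_sq] at h
  exact h

/-- the key "Nash-type" inequality -/
lemma key_ineq (g : Lp ℝ 2 P) (n : ℕ) :
    ((box d n).card : ℝ) * ⟪g, g⟫
      ≤ ‖Sop hθ n g‖ * ‖g‖
        + ((box d n).card : ℝ) * ((d * n : ℕ) : ℝ) ^ 2 * (-⟪Lop g, g⟫) := by
  have hineq : ∀ x ∈ box d n,
      ⟪g - Umap hθ x g, g⟫ ≤ ((d * n : ℕ) : ℝ) ^ 2 * (-⟪Lop g, g⟫) := by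
    intro x hx
    have hkx : (∑ i, (x i).natAbs) ≤ d * n := by
      have hb : ∀ i, (x i).natAbs ≤ n := by
        intro i
        have hx' := (Fintype.mem_piFinset).1 hx i
        rw [Finset.mem_Icc] at hx'
        omega
      calc ∑ i, (x i).natAbs ≤ ∑ _i : Fin d, n := Finset.sum_le_sum fun i _ => hb i
        _ = d * n := by simp [Finset.sum_const, mul_comm]
    rw [inner_sub_Umap hθ x g]
    have h1 := norm_sub_Umap_le hθ g _ x rfl
    have hSBl : (0:ℝ) ≤ ∑ q : Fin d × Bool, ‖g - Umap hθ (dir q) g‖ ^ 2 := by positivity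
    have hSBsq : Real.sqrt (∑ q : Fin d × Bool, ‖g - Umap hθ (dir q) g‖ ^ 2) ^ 2
        = ∑ q : Fin d × Bool, ‖g - Umap hθ (dir q) g‖ ^ 2 := Real.sq_sqrt hSBl
    have hsum_eq : (∑ q : Fin d × Bool, ‖g - Umap hθ (dir q) g‖ ^ 2)
        = -2 * ⟪Lop g, g⟫ := by
      rw [Lop_inner hθ hLop g]; ring
    have h2 : ‖g - Umap hθ x g‖ ^ 2
        ≤ ((∑ i, (x i).natAbs : ℕ) : ℝ) ^ 2 * (-2 * ⟪Lop g, g⟫) := by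
      have := pow_le_pow_left₀ (norm_nonneg _) h1 2
      rw [mul_pow, hSBsq, hsum_eq] at this
      exact this
    have h3 : ((∑ i, (x i).natAbs : ℕ) : ℝ) ^ 2 ≤ ((d * n : ℕ) : ℝ) ^ 2 := by
      have : ((∑ i, (x i).natAbs : ℕ) : ℝ) ≤ ((d * n : ℕ) : ℝ) := by exact_mod_cast hkx
      exact pow_le_pow_left₀ (by positivity) this 2
    have hL : (0:ℝ) ≤ -2 * ⟪Lop g, g⟫ := by rw [← hsum_eq]; exact hSBl
    nlinarith
  have hsplit : ((box d n).card : ℝ) * ⟪g, g⟫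
      = ⟪Sop hθ n g, g⟫ + ∑ x ∈ box d n, ⟪g - Umap hθ x g, g⟫ := by
    rw [Sop, ContinuousLinearMap.sum_apply, sum_inner, ← Finset.sum_add_distrib]
    have h : ∀ x : V d, ⟪Umap hθ x g, g⟫ + ⟪g - Umap hθ x g, g⟫ = ⟪g, g⟫ := by
      intro x
      rw [← inner_add_left]
      congr 1
      abel
    rw [Finset.sum_congr rfl fun x _ => h x, Finset.sum_const, nsmul_eq_mul]
  rw [hsplit]
  have hS := real_inner_le_norm (Sop hθ n g) g
  have hsum2 : ∑ x ∈ box d n, ⟪g - Umap hθ x g, g⟫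
      ≤ ((box d n).card : ℝ) * (((d * n : ℕ) : ℝ) ^ 2 * (-⟪Lop g, g⟫)) := by
    have := Finset.sum_le_card_nsmul (box d n) _ _ hineq
    rwa [nsmul_eq_mul] at this
  linarith

end Generator

section Analysis

/-- one step of exponential decay from a linear differential inequality -/
lemma decay_step {u u' : ℝ → ℝ} {b τ a c : ℝ} (hτ : 0 < τ) (hac : a ≤ c)
    (hder : ∀ r, HasDerivAt u (u' r) r)
    (hb : ∀ r, a ≤ r → r ≤ c → u' r ≤ (b - u r) / τ) :
    u c ≤ b + (u a - b) * Real.exp (-((c - a) / τ)) := by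
  set w : ℝ → ℝ := fun r => (u r - b) * Real.exp (r / τ) with hw
  have hwder : ∀ r, HasDerivAt w ((u' r + (u r - b) / τ) * Real.exp (r / τ)) r := by
    intro r
    have h1 : HasDerivAt (fun s => u s - b) (u' r) r := (hder r).sub_const b
    have h3 : HasDerivAt (fun s : ℝ => s / τ) (1 / τ) r := (hasDerivAt_id r).div_const τ
    have h2 : HasDerivAt (fun s : ℝ => Real.exp (s / τ)) (Real.exp (r / τ) * (1 / τ)) r :=
      h3.exp
    have h4 := h1.mul h2
    refine h4.congr_deriv ?_
    ring
  have hanti : AntitoneOn w (Set.Icc a c) := by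
    apply antitoneOn_of_deriv_nonpos (convex_Icc a c)
    · exact fun r _ => (hwder r).continuousAt.continuousWithinAt
    · exact fun r _ => (hwder r).differentiableAt.differentiableWithinAt
    · intro r hr
      rw [interior_Icc] at hr
      rw [(hwder r).deriv]
      have h5 := hb r hr.1.le hr.2.le
      have h6 : (b - u r) / τ = -((u r - b) / τ) := by ring
      apply mul_nonpos_of_nonpos_of_nonneg
      · rw [h6] at h5; linarith
      · exact (Real.exp_pos _).le
  have h := hanti (Set.left_mem_Icc.2 hac) (Set.right_mem_Icc.2 hac) hac
  have hepos := Real.exp_pos (c / τ)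
  simp only [hw] at h
  have h2 : u c - b ≤ (u a - b) * Real.exp (a / τ) / Real.exp (c / τ) := by
    rw [le_div_iff₀ hepos]; exact h
  have h3 : Real.exp (a / τ) / Real.exp (c / τ) = Real.exp (-((c - a) / τ)) := by
    rw [← Real.exp_sub]; congr 1; ring
  rw [mul_div_assoc, h3] at h2
  linarith

lemma box_card (d n : ℕ) : ((box d n).card : ℝ) = ((2 * n + 1 : ℕ) : ℝ) ^ d := by
  have h1 : (box d n).card = (2 * n + 1) ^ d := by
    rw [box, Fintype.card_piFinset]
    have h2 : (Finset.Icc (-(n : ℤ)) n).card = 2 * n + 1 := by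
      rw [Int.card_Icc]
      omega
    simp [h2]
  rw [h1]
  push_cast
  ring

lemma box_zero (d : ℕ) : box d 0 = ({0} : Finset (V d)) := by
  ext x
  simp only [box, Fintype.mem_piFinset, Finset.mem_Icc, Finset.mem_singleton]
  constructor
  · intro h
    funext i
    have := h i
    simp only [Nat.cast_zero, neg_zero] at this
    have h1 : x i = 0 := le_antisymm this.2 this.1
    simpa using h1
  · intro h i
    subst h
    simp

lemma half_bound (d : ℕ) : Real.exp (-((d : ℝ) + 1)) * 2 ^ ((d : ℝ) / 2) ≤ 1 / 2 := by
  have hd0 : (0 : ℝ) ≤ (d : ℝ) := Nat.cast_nonneg d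
  have h1 : (2 : ℝ) ^ ((d : ℝ) / 2) ≤ 2 ^ (d : ℝ) :=
    Real.rpow_le_rpow_of_exponent_le one_le_two (by linarith)
  have h2 : (2 : ℝ) ^ (d : ℝ) ≤ Real.exp 1 ^ (d : ℝ) := by
    apply Real.rpow_le_rpow (by norm_num) _ hd0
    have := Real.exp_one_gt_d9
    linarith
  have h3 : Real.exp 1 ^ (d : ℝ) = Real.exp d := Real.exp_one_rpow _
  have h4 : Real.exp (-((d : ℝ) + 1)) * Real.exp d = Real.exp (-1) := by
    rw [← Real.exp_add]; congr 1; ring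
  have h5 : Real.exp (-1 : ℝ) ≤ 1 / 2 := by
    rw [Real.exp_neg, inv_le_comm₀ (Real.exp_pos 1) (by norm_num)]
    have := Real.exp_one_gt_d9
    norm_num
    linarith
  have hpos := (Real.exp_pos (-((d : ℝ) + 1))).le
  calc Real.exp (-((d : ℝ) + 1)) * 2 ^ ((d : ℝ) / 2)
      ≤ Real.exp (-((d : ℝ) + 1)) * Real.exp d := by
        apply mul_le_mul_of_nonneg_left _ hpos
        rw [← h3]; exact le_trans h1 h2
    _ = Real.exp (-1) := h4
    _ ≤ 1 / 2 := h5

end Analysis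

section NormSq

variable {d : ℕ} {P : Measure (Env d)}

lemma norm_sq_eq_integral (G : Lp ℝ 2 P) : ‖G‖ ^ 2 = ∫ ω, (G ω) ^ 2 ∂P := by
  rw [← real_inner_self_eq_norm_sq, L2.inner_def]
  refine integral_congr_ae (Filter.Eventually.of_forall fun ω => ?_)
  simp [RCLike.inner_apply, conj_trivial, sq]

end NormSq

set_option maxHeartbeats 2000000 in
/-- **Variance decay for the simple random walk.** For every `d ≥ 1` there is `C > 0`
(depending only on `d`) such that for every law `ℙ` as in the setting, every `f ∈ L²(ℙ)` with
`𝒩(f)` finite (i.e. `𝔼[S_n(f)²] ≤ Nf |B_n|` for all `n`, for some `Nf`) and every `t > 0`: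
`𝔼[(exp(tL°) f)²] ≤ C 𝒩(f) / t^{d/2}`. -/
theorem variance_decay_simple_rw :
    ∀ d : ℕ, 1 ≤ d → ∃ C : ℝ, 0 < C ∧
      ∀ (P : Measure (Env d)), IsProbabilityMeasure P →
        (∀ x : V d, MeasurePreserving (theta x) P P) →
        (∀ᵐ ω ∂P, ∀ e : Edge d, 1 ≤ ω e) →
        ∀ Lop : Lp ℝ 2 P →L[ℝ] Lp ℝ 2 P,
          (∀ g : Lp ℝ 2 P,
            (Lop g : Env d → ℝ) =ᵐ[P]
              fun ω => ∑ p : Fin d × Bool,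
                ((g : Env d → ℝ) (theta (dir p) ω) - (g : Env d → ℝ) ω)) →
          ∀ (f : Env d → ℝ) (hf : MemLp f 2 P) (Nf : ℝ),
            (∀ n : ℕ, ∫ ω, Sfun d n f ω ^ 2 ∂P ≤ Nf * ((box d n).card : ℝ)) →
            ∀ t : ℝ, 0 < t →
              ‖NormedSpace.exp (t • Lop) (hf.toLp f)‖ ^ 2 ≤
                C * Nf / t ^ ((d : ℝ) / 2) := by
  intro d hd
  have hd1 : (1 : ℝ) ≤ (d : ℝ) := by exact_mod_cast hd
  set t0 : ℝ := ((2 * (d + 1) * d ^ 2 : ℕ) : ℝ) with ht0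
  have ht0pos : 0 < t0 := by
    rw [ht0]
    have h : 0 < 2 * (d + 1) * d ^ 2 := by positivity
    exact_mod_cast h
  have ht0one : (1 : ℝ) ≤ t0 := by
    rw [ht0]; push_cast; nlinarith [hd1]
  set c1 : ℝ := t0 ^ ((d : ℝ) / 2) with hc1
  have hc1pos : 0 < c1 := Real.rpow_pos_of_pos ht0pos _
  refine ⟨3 * c1, by positivity, ?_⟩
  intro P hP hθ _hcond Lop hLop f hf Nf hN t ht
  set F : Lp ℝ 2 P := hf.toLp f with hF
  set u : ℝ → ℝ := fun s =>
    ⟪NormedSpace.exp (s • Lop) F, NormedSpace.exp (s • Lop) F⟫ with hu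
  set u' : ℝ → ℝ := fun s =>
    2 * ⟪Lop (NormedSpace.exp (s • Lop) F), NormedSpace.exp (s • Lop) F⟫ with hu'
  have huN : ∀ s, u s = ‖NormedSpace.exp (s • Lop) F‖ ^ 2 := fun s =>
    real_inner_self_eq_norm_sq _
  have hu_nonneg : ∀ s, 0 ≤ u s := fun s => by rw [huN]; positivity
  have hu_anti : Antitone u := innersq_antitone hθ hLop F
  have hu0 : u 0 = ‖F‖ ^ 2 := by
    rw [huN 0]
    norm_num [zero_smul, NormedSpace.exp_zero, ContinuousLinearMap.one_apply]
  -- bounds on the box sums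
  have hSF : ∀ n : ℕ, ‖Sop hθ n F‖ ^ 2 ≤ Nf * ((box d n).card : ℝ) := by
    intro n
    have h1 : ∀ x : V d, ⇑(Umap hθ x F) =ᵐ[P] fun ω => f (theta x ω) := by
      intro x
      exact (Umap_coe hθ x F).trans
        ((hθ x).quasiMeasurePreserving.ae_eq_comp (hf.coeFn_toLp))
    have h2 : ∀ᵐ ω ∂P, ∀ x ∈ box d n, (Umap hθ x F) ω = f (theta x ω) :=
      (ae_ball_iff (box d n).countable_toSet).2 fun x _ => h1 x
    have hae : ⇑(Sop hθ n F) =ᵐ[P] Sfun d n f := by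
      have h3 : Sop hθ n F = ∑ x ∈ box d n, Umap hθ x F := by
        rw [Sop, ContinuousLinearMap.sum_apply]
      rw [h3]
      filter_upwards [coeFn_finset_sum (box d n) (fun x => Umap hθ x F), h2] with ω h4 h5
      rw [h4, Sfun]
      exact Finset.sum_congr rfl fun x hx => h5 x hx
    rw [norm_sq_eq_integral]
    calc ∫ ω, ((Sop hθ n F) ω) ^ 2 ∂P = ∫ ω, Sfun d n f ω ^ 2 ∂P :=
        integral_congr_ae (hae.mono fun ω h => by dsimp only; rw [h])
      _ ≤ Nf * ((box d n).card : ℝ) := hN n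
  have hSzero : Sop hθ 0 F = F := by
    have : Sop (d := d) hθ 0 = Umap hθ 0 := by
      rw [Sop, box_zero, Finset.sum_singleton]
    rw [this, Umap_zero]
  have hNf0 : ‖F‖ ^ 2 ≤ Nf := by
    have h := hSF 0
    rw [hSzero, box_card] at h
    simpa using h
  have hNfnn : 0 ≤ Nf := le_trans (by positivity) hNf0
  have huder : ∀ s : ℝ, HasDerivAt u (u' s) s := fun s =>
    hasDerivAt_inner_exp (Lop := Lop) F s
  -- the key differential inequality
  have hkey : ∀ n : ℕ, 1 ≤ n → ∀ s : ℝ, 0 ≤ s →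
      u' s ≤ (Nf / ((2 * n + 1 : ℕ) : ℝ) ^ d - u s) / (((d * n : ℕ) : ℝ) ^ 2) := by
    intro n hn s hs
    set g : Lp ℝ 2 P := NormedSpace.exp (s • Lop) F with hg
    have hgg : ⟪g, g⟫ = u s := rfl
    have hng : ‖g‖ ^ 2 = u s := by rw [← real_inner_self_eq_norm_sq, hgg]
    have hus : u' s = 2 * ⟪Lop g, g⟫ := rfl
    have hkey1 := key_ineq hθ hLop g n
    have hcomm : Sop hθ n g = NormedSpace.exp (s • Lop) (Sop hθ n F) :=
      (exp_comm_Sop hθ hLop s n F).symm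
    have hSg : ‖Sop hθ n g‖ ^ 2 ≤ Nf * ((box d n).card : ℝ) := by
      rw [hcomm]
      exact le_trans (exp_contract hθ hLop (Sop hθ n F) hs) (hSF n)
    have hm : (0 : ℝ) < ((box d n).card : ℝ) := by
      rw [box_card]; positivity
    have hdnpos : 0 < d * n := Nat.mul_pos (by omega) (by omega)
    have hdn : (0 : ℝ) < ((d * n : ℕ) : ℝ) ^ 2 := by
      have : (0 : ℝ) < ((d * n : ℕ) : ℝ) := by exact_mod_cast hdnpos
      positivity
    set m : ℝ := ((box d n).card : ℝ) with hmdef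
    have hmeq : m = ((2 * n + 1 : ℕ) : ℝ) ^ d := box_card d n
    rw [hgg] at hkey1
    -- hkey1 : m * u s ≤ ‖Sop g‖ * ‖g‖ + m * (dn)² * (-⟪Lop g, g⟫)
    have hng2 : m ^ 2 * ‖g‖ ^ 2 = m ^ 2 * u s := by rw [hng]
    have h6 : 2 * m * (‖Sop hθ n g‖ * ‖g‖) ≤ Nf * m + m ^ 2 * u s := by
      nlinarith [sq_nonneg (‖Sop hθ n g‖ - m * ‖g‖), hSg, hng2]
    have h6' : ‖Sop hθ n g‖ * ‖g‖ ≤ Nf / 2 + m * u s / 2 := by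
      nlinarith [h6, hm]
    have h8 : (u' s * (((d * n : ℕ) : ℝ) ^ 2) + u s) * m ≤ Nf := by
      rw [hus]
      nlinarith [hkey1, h6']
    have h9 : u' s * (((d * n : ℕ) : ℝ) ^ 2) + u s ≤ Nf / m :=
      (le_div_iff₀ hm).2 h8
    rw [← hmeq, le_div_iff₀ hdn]
    linarith
  -- one decay step
  have hstep : ∀ s : ℝ, t0 ≤ s →
      u s ≤ c1 * Nf / s ^ ((d : ℝ) / 2) + Real.exp (-((d : ℝ) + 1)) * u (s / 2) := by
    intro s hs
    have hspos : 0 < s := lt_of_lt_of_le ht0pos hs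
    have hst0 : 1 ≤ s / t0 := (one_le_div ht0pos).2 hs
    set r : ℝ := Real.sqrt (s / t0) with hr
    have hr1 : 1 ≤ r := by
      rw [hr, show (1 : ℝ) = Real.sqrt 1 by simp]
      exact Real.sqrt_le_sqrt hst0
    have hrpos : 0 < r := lt_of_lt_of_le one_pos hr1
    set n : ℕ := ⌊r⌋₊ with hn
    have hn1 : 1 ≤ n := Nat.le_floor (by exact_mod_cast hr1)
    have hnr : (n : ℝ) ≤ r := Nat.floor_le hrpos.le
    have hrn : r ≤ 2 * (n : ℝ) + 1 := by
      have h1 := Nat.lt_floor_add_one r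
      have h2 : (0 : ℝ) ≤ (n : ℝ) := Nat.cast_nonneg n
      rw [← hn] at h1
      linarith
    have hr2 : r ^ 2 = s / t0 := Real.sq_sqrt (by positivity)
    have hm'lb : (s / t0) ^ ((d : ℝ) / 2) ≤ ((2 * n + 1 : ℕ) : ℝ) ^ d := by
      have h1 : (s / t0) ^ ((d : ℝ) / 2) = r ^ (d : ℕ) := by
        rw [hr, Real.sqrt_eq_rpow, ← Real.rpow_natCast ((s / t0) ^ ((1 : ℝ) / 2)) d,
          ← Real.rpow_mul (by positivity)]
        congr 1
        ring
      rw [h1]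
      have h2 : r ^ (d : ℕ) ≤ (2 * (n : ℝ) + 1) ^ (d : ℕ) :=
        pow_le_pow_left₀ hrpos.le hrn d
      calc r ^ (d : ℕ) ≤ (2 * (n : ℝ) + 1) ^ (d : ℕ) := h2
        _ = ((2 * n + 1 : ℕ) : ℝ) ^ d := by push_cast; ring
    have ht0eq : t0 = 2 * ((d : ℝ) + 1) * (d : ℝ) ^ 2 := by
      rw [ht0]; push_cast; ring
    have hn2 : (n : ℝ) ^ 2 ≤ s / t0 := by
      nlinarith [hnr, hr2, (by positivity : (0:ℝ) ≤ (n:ℝ))]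
    have hKle : (((d * n : ℕ)) : ℝ) ^ 2 ≤ s / (2 * ((d : ℝ) + 1)) := by
      push_cast
      have hdd : (0 : ℝ) < (d : ℝ) ^ 2 := by positivity
      rw [ht0eq] at hn2
      have h3 : ((d : ℝ) * n) ^ 2 = (d : ℝ) ^ 2 * (n : ℝ) ^ 2 := by ring
      rw [h3]
      calc (d : ℝ) ^ 2 * (n : ℝ) ^ 2
          ≤ (d : ℝ) ^ 2 * (s / (2 * ((d : ℝ) + 1) * (d : ℝ) ^ 2)) :=
            mul_le_mul_of_nonneg_left hn2 (by positivity)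
        _ = s / (2 * ((d : ℝ) + 1)) := by
            field_simp
    set K : ℝ := (((d * n : ℕ)) : ℝ) ^ 2 with hK
    have hKpos : (0 : ℝ) < K := by
      rw [hK]
      have h : 0 < d * n := Nat.mul_pos (by omega) (by omega)
      have h' : (0 : ℝ) < ((d * n : ℕ) : ℝ) := by exact_mod_cast h
      positivity
    set b : ℝ := Nf / ((2 * n + 1 : ℕ) : ℝ) ^ d with hb
    have hbnn : 0 ≤ b := div_nonneg hNfnn (by positivity)
    have hds := decay_step (u := u) (u' := u') (b := b) (τ := K) (a := s / 2) (c := s)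
      hKpos (by linarith) huder (fun r' h1 h2 => hkey n hn1 r' (by linarith))
    have hX : (d : ℝ) + 1 ≤ (s - s / 2) / K := by
      rw [show s - s / 2 = s / 2 by ring, le_div_iff₀ hKpos]
      calc ((d : ℝ) + 1) * K ≤ ((d : ℝ) + 1) * (s / (2 * ((d : ℝ) + 1))) := by
            apply mul_le_mul_of_nonneg_left hKle (by linarith)
        _ = s / 2 := by field_simp
    have hexple : Real.exp (-((s - s / 2) / K)) ≤ Real.exp (-((d : ℝ) + 1)) :=
      Real.exp_le_exp.2 (by linarith)
    have hspow : 0 < s ^ ((d : ℝ) / 2) := Real.rpow_pos_of_pos hspos _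
    have ht0pow : 0 < t0 ^ ((d : ℝ) / 2) := Real.rpow_pos_of_pos ht0pos _
    have hb_le : b ≤ c1 * Nf / s ^ ((d : ℝ) / 2) := by
      rw [hb, hc1]
      have h1 : (s / t0) ^ ((d : ℝ) / 2) = s ^ ((d : ℝ) / 2) / t0 ^ ((d : ℝ) / 2) :=
        Real.div_rpow hspos.le ht0pos.le _
      have h2 : s ^ ((d : ℝ) / 2) / t0 ^ ((d : ℝ) / 2) ≤ ((2 * n + 1 : ℕ) : ℝ) ^ d := by
        rw [← h1]; exact hm'lb
      have hq : (0 : ℝ) < s ^ ((d : ℝ) / 2) / t0 ^ ((d : ℝ) / 2) := by positivity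
      have hmp : (0 : ℝ) < ((2 * n + 1 : ℕ) : ℝ) ^ d := by positivity
      calc Nf / ((2 * n + 1 : ℕ) : ℝ) ^ d
          ≤ Nf / (s ^ ((d : ℝ) / 2) / t0 ^ ((d : ℝ) / 2)) := by
            rw [div_le_div_iff₀ hmp hq]
            nlinarith [h2, hNfnn, hq, hmp]
        _ = t0 ^ ((d : ℝ) / 2) * Nf / s ^ ((d : ℝ) / 2) := by
            rw [div_div_eq_mul_div]
            ring
    have h9 : (u (s / 2) - b) * Real.exp (-((s - s / 2) / K))
        ≤ u (s / 2) * Real.exp (-((d : ℝ) + 1)) := by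
      rcases le_or_gt (u (s / 2) - b) 0 with hcs | hcs
      · have h10 := mul_nonpos_of_nonpos_of_nonneg hcs (Real.exp_pos (-((s - s/2)/K))).le
        have h11 : 0 ≤ u (s / 2) * Real.exp (-((d : ℝ) + 1)) :=
          mul_nonneg (hu_nonneg _) (Real.exp_pos _).le
        linarith
      · calc (u (s / 2) - b) * Real.exp (-((s - s / 2) / K))
            ≤ (u (s / 2) - b) * Real.exp (-((d : ℝ) + 1)) :=
              mul_le_mul_of_nonneg_left hexple hcs.le
          _ ≤ u (s / 2) * Real.exp (-((d : ℝ) + 1)) := by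
              nlinarith [hbnn, (Real.exp_pos (-((d : ℝ) + 1))).le]
    calc u s ≤ b + (u (s / 2) - b) * Real.exp (-((s - s / 2) / K)) := hds
      _ ≤ c1 * Nf / s ^ ((d : ℝ) / 2) + Real.exp (-((d : ℝ) + 1)) * u (s / 2) := by
          rw [mul_comm (Real.exp (-((d : ℝ) + 1))) (u (s / 2))]
          linarith [hb_le, h9]
  -- base case
  have hbase : ∀ s : ℝ, 0 < s → s ≤ t0 → u s ≤ 3 * c1 * Nf / s ^ ((d : ℝ) / 2) := by
    intro s hs hs2
    have h1 : u s ≤ Nf := by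
      have h2 : u s ≤ u 0 := hu_anti hs.le
      rw [hu0] at h2
      linarith [hNf0]
    have hspow : 0 < s ^ ((d : ℝ) / 2) := Real.rpow_pos_of_pos hs _
    rw [le_div_iff₀ hspow]
    have h2 : s ^ ((d : ℝ) / 2) ≤ t0 ^ ((d : ℝ) / 2) :=
      Real.rpow_le_rpow hs.le hs2 (by positivity)
    calc u s * s ^ ((d : ℝ) / 2) ≤ Nf * t0 ^ ((d : ℝ) / 2) :=
        mul_le_mul h1 h2 hspow.le hNfnn
      _ = Nf * c1 := by rw [hc1]
      _ ≤ 3 * c1 * Nf := by nlinarith [hc1pos, hNfnn]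
  -- iteration
  have hmain : ∀ k : ℕ, ∀ s : ℝ, 0 < s → s ≤ t0 * 2 ^ k →
      u s ≤ 3 * c1 * Nf / s ^ ((d : ℝ) / 2) := by
    intro k
    induction k with
    | zero =>
      intro s hs hs2
      exact hbase s hs (by simpa using hs2)
    | succ k ih =>
      intro s hs hs2
      rcases le_or_gt s t0 with hcs | hcs
      · exact hbase s hs hcs
      · have h1 := hstep s hcs.le
        have h2 := ih (s / 2) (by positivity) (by
          rw [pow_succ] at hs2; linarith)
        have hspow : 0 < s ^ ((d : ℝ) / 2) := Real.rpow_pos_of_pos hs _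
        have hhalfpow : (s / 2) ^ ((d : ℝ) / 2) = s ^ ((d : ℝ) / 2) / 2 ^ ((d : ℝ) / 2) :=
          Real.div_rpow hs.le (by norm_num) _
        have h2pow : (0 : ℝ) < (2 : ℝ) ^ ((d : ℝ) / 2) := Real.rpow_pos_of_pos two_pos _
        have hh := half_bound d
        have h3 : Real.exp (-((d : ℝ) + 1)) * u (s / 2)
            ≤ Real.exp (-((d : ℝ) + 1)) * (3 * c1 * Nf / ((s / 2) ^ ((d : ℝ) / 2))) :=
          mul_le_mul_of_nonneg_left h2 (Real.exp_pos _).le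
        have h4 : Real.exp (-((d : ℝ) + 1)) * (3 * c1 * Nf / ((s / 2) ^ ((d : ℝ) / 2)))
            ≤ (3 * c1 * Nf / 2) / s ^ ((d : ℝ) / 2) := by
          rw [hhalfpow, div_div_eq_mul_div, ← mul_div_assoc]
          rw [div_le_div_iff₀ hspow hspow]
          have hcn : (0:ℝ) ≤ 3 * c1 * Nf := by
            have := mul_nonneg hc1pos.le hNfnn
            linarith
          have h5 : Real.exp (-((d : ℝ) + 1)) * (3 * c1 * Nf) * 2 ^ ((d : ℝ) / 2)
              ≤ 3 * c1 * Nf / 2 := by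
            have h6 := mul_le_mul_of_nonneg_right hh hcn
            nlinarith [h6]
          nlinarith [h5, hspow]
        calc u s ≤ c1 * Nf / s ^ ((d : ℝ) / 2) + Real.exp (-((d : ℝ) + 1)) * u (s / 2) := h1
          _ ≤ c1 * Nf / s ^ ((d : ℝ) / 2) + (3 * c1 * Nf / 2) / s ^ ((d : ℝ) / 2) := by
              linarith [le_trans h3 h4]
          _ ≤ 3 * c1 * Nf / s ^ ((d : ℝ) / 2) := by
              rw [← add_div, div_le_div_iff₀ hspow hspow]
              have h7 : (0:ℝ) ≤ c1 * Nf * s ^ ((d : ℝ) / 2) :=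
                mul_nonneg (mul_nonneg hc1pos.le hNfnn) hspow.le
              nlinarith [h7]
  obtain ⟨k, hk⟩ : ∃ k : ℕ, t ≤ t0 * 2 ^ k := by
    obtain ⟨k, hk⟩ := pow_unbounded_of_one_lt t (one_lt_two (α := ℝ))
    refine ⟨k, ?_⟩
    have h1 : (0 : ℝ) < 2 ^ k := by positivity
    nlinarith [ht0one, hk, h1]
  have hfinal := hmain k t ht hk
  rw [← huN t]
  exact hfinal

end RWRC
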